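/- Let s(n,r,k) denote the number of elements of S(n,r) of rank k. For n ≥ 1 and 0 ≤ r < n: s(n,r,k) = s(n−1,r,k) if 0 ≤ k < n−r; s(n,r,k) = s(n−1,r,k) + s(n−1,r,k−(n−r)) if n−r ≤ k ≤ R(n−1,r); and s(n,r,k) = s(n−1,r,k−(n−r)) if R(n−1,r) < k ≤ R(n,r). Moreover s(n,n,k) = s(n,0,k). -/

import Mathlib

open Finset

/-- The alphabet `A(n,r)` is encoded as the integer interval `[-(n-r), r]`:
the barred symbol `k̄` is `-k`, the tilded symbol `k̃` is `k`, and `0` is `0`.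
A string of `S(n,r)` is a function `w : Fin n → ℤ` satisfying: the first `r`
entries lie in `[0,r]`, the last `n-r` entries lie in `[-(n-r),0]`, the whole
string is weakly decreasing, the nonzero entries of the positive part are
strictly decreasing, and the nonzero entries of the negative part are strictly
decreasing. -/
def Admissible (n r : ℕ) (w : Fin n → ℤ) : Prop :=
  (∀ i : Fin n, (i : ℕ) < r → 0 ≤ w i ∧ w i ≤ (r : ℤ)) ∧
  (∀ i : Fin n, r ≤ (i : ℕ) → -((n - r : ℕ) : ℤ) ≤ w i ∧ w i ≤ 0) ∧
  (∀ i j : Fin n, i ≤ j → w j ≤ w i) ∧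
  (∀ i j : Fin n, i < j → (j : ℕ) < r → w j ≠ 0 → w j < w i) ∧
  (∀ i j : Fin n, i < j → r ≤ (i : ℕ) → w i ≠ 0 → w j < w i)

/-- The componentwise (product) order on strings. -/
def sle {n : ℕ} (w w' : Fin n → ℤ) : Prop := ∀ i, w i ≤ w' i

/-- Strict componentwise order. -/
def slt {n : ℕ} (w w' : Fin n → ℤ) : Prop := sle w w' ∧ w ≠ w'

/-- `w'` covers `w` in the poset `S(n,r)`. -/
def SCovers (n r : ℕ) (w w' : Fin n → ℤ) : Prop :=
  slt w w' ∧ ¬ ∃ u : Fin n → ℤ, Admissible n r u ∧ slt w u ∧ slt u w'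

/-- The rank function `ρ` of `S(n,r)`:
`ρ(i_1⋯i_r|j_1⋯j_{n-r}) = Σ i_k + Σ (k - j_k)` (symbols read as integers). -/
def rho (n r : ℕ) (w : Fin n → ℤ) : ℤ :=
  ∑ i : Fin n, (if (i : ℕ) < r then w i else ((((i : ℕ) - r : ℕ) : ℤ) + 1 + w i))

/-- `wc` is the complement of `w` in `S(n,r)`: the nonzero symbols of `wc`
are exactly the elements of `A(n,r) ∖ {0}` that are not symbols of `w`. -/
def ComplOf (n r : ℕ) (w wc : Fin n → ℤ) : Prop :=
  ∀ a : ℤ, a ≠ 0 →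
    ((∃ i, wc i = a) ↔ (-((n - r : ℕ) : ℤ) ≤ a ∧ a ≤ (r : ℤ) ∧ ¬ ∃ i, w i = a))

/-- The top rank `R(n,r) = C(r+1,2) + C(n-r+1,2)`. -/
def Rnk (n r : ℕ) : ℕ := r * (r + 1) / 2 + (n - r) * (n - r + 1) / 2

/-- `s(n,r,k)`: the number of elements of `S(n,r)` of rank `k`. -/
noncomputable def sCount (n r k : ℕ) : ℕ :=
  {w : Fin n → ℤ | Admissible n r w ∧ rho n r w = (k : ℤ)}.ncard

/-- The minimum `0⋯0|12⋯(n-r)` of `S(n,r)`. -/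
def botStr (n r : ℕ) : Fin n → ℤ :=
  fun i => if (i : ℕ) < r then 0 else -((((i : ℕ) - r : ℕ) : ℤ) + 1)

/-- The maximum `r(r-1)⋯1|0⋯0` of `S(n,r)`. -/
def topStr (n r : ℕ) : Fin n → ℤ :=
  fun i => if (i : ℕ) < r then (r : ℤ) - ((i : ℕ) : ℤ) else 0

/-- The string `r(r-1)⋯1|12⋯(n-r)` containing every nonzero symbol. -/
def fullStr (n r : ℕ) : Fin n → ℤ :=
  fun i => if (i : ℕ) < r then (r : ℤ) - ((i : ℕ) : ℤ)
           else -((((i : ℕ) - r : ℕ) : ℤ) + 1)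

/-- An `(n,r)`-function: increasing on the alphabet, zero at `0`,
and strictly negative on the barred symbols. -/
def IsNRFun (n r : ℕ) (f : ℤ → ℝ) : Prop :=
  f 0 = 0 ∧
  (∀ a b : ℤ, -((n - r : ℕ) : ℤ) ≤ a → a ≤ b → b ≤ (r : ℤ) → f a ≤ f b) ∧
  (∀ a : ℤ, -((n - r : ℕ) : ℤ) ≤ a → a < 0 → f a < 0)

/-- The total sum of `f` over the alphabet `A(n,r)` is nonnegative
(the defining condition of an `(n,r)`-weight function, since `f 0 = 0`). -/
def TotalNN (n r : ℕ) (f : ℤ → ℝ) : Prop :=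
  0 ≤ ∑ a ∈ Finset.Icc (-((n - r : ℕ) : ℤ)) (r : ℤ), f a

/-- The sum function `Σ_f` induced by `f` on strings. -/
def Sf (n : ℕ) (f : ℤ → ℝ) (w : Fin n → ℤ) : ℝ := ∑ i : Fin n, f (w i)
def admSet (n r : ℕ) (κ : ℤ) : Set (Fin n → ℤ) := {w | Admissible n r w ∧ rho n r w = κ}

noncomputable def sZ (n r : ℕ) (κ : ℤ) : ℕ := (admSet n r κ).ncard

lemma sCount_eq_sZ (n r k : ℕ) : sCount n r k = sZ n r (k : ℤ) := rfl

lemma admSet_finite (n r : ℕ) (κ : ℤ) : (admSet n r κ).Finite := by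
  have h : admSet n r κ ⊆ Set.pi Set.univ
      (fun _ : Fin n => Set.Icc (-((n : ℤ) + r)) ((n : ℤ) + r)) := by
    rintro w ⟨⟨h1, h2, -, -, -⟩, -⟩ i -
    rcases lt_or_ge (i : ℕ) r with h | h
    · have := h1 i h
      simp only [Set.mem_Icc]
      omega
    · have := h2 i h
      simp only [Set.mem_Icc]
      omega
  exact (Set.Finite.pi fun _ => Set.finite_Icc _ _).subset h

lemma negChain {n r : ℕ} {w : Fin n → ℤ} (hw : Admissible n r w) :
    ∀ d : ℕ, ∀ i j : Fin n, (j : ℕ) = (i : ℕ) + d → r ≤ (i : ℕ) → w i < 0 →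
      w j ≤ w i - d := by
  obtain ⟨h1, h2, h3, h4, h5⟩ := hw
  intro d
  induction d with
  | zero =>
    intro i j hj _ _
    have : j = i := Fin.ext (by omega)
    simp [this]
  | succ d ih =>
    intro i j hj hr hneg
    have hd : (i : ℕ) + d < n := by have := j.isLt; omega
    have h1' := ih i ⟨(i : ℕ) + d, hd⟩ rfl hr hneg
    have hdz : (0 : ℤ) ≤ (d : ℤ) := by positivity
    have hj'neg : w ⟨(i : ℕ) + d, hd⟩ < 0 := by linarith
    have hlt := h5 ⟨(i : ℕ) + d, hd⟩ j (by simp [Fin.lt_def]; omega)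
      (by simp; omega) (ne_of_lt hj'neg)
    push_cast
    linarith

lemma posChain {n r : ℕ} {w : Fin n → ℤ} (hw : Admissible n r w) :
    ∀ d : ℕ, ∀ i j : Fin n, (j : ℕ) = (i : ℕ) + d → (j : ℕ) < r → 0 < w j →
      w j ≤ w i - d := by
  obtain ⟨h1, h2, h3, h4, h5⟩ := hw
  intro d
  induction d with
  | zero =>
    intro i j hj _ _
    have : j = i := Fin.ext (by omega)
    simp [this]
  | succ d ih =>
    intro i j hj hjr hpos
    have hd : (i : ℕ) + 1 < n := by have := j.isLt; omega
    set i' : Fin n := ⟨(i : ℕ) + 1, hd⟩ with hi'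
    have h1' := ih i' j (by simp [hi']; omega) hjr hpos
    have hmono := h3 i' j (by simp [Fin.le_def, hi']; omega)
    have hi'pos : 0 < w i' := by linarith
    have hlt := h4 i i' (by simp [Fin.lt_def, hi']) (by simp [hi']; omega)
      (ne_of_gt hi'pos)
    have hdz : (0 : ℤ) ≤ (d : ℤ) := by positivity
    push_cast
    linarith

lemma val_le {n r : ℕ} {w : Fin n → ℤ} (hw : Admissible n r w) (i : Fin n)
    (hi : (i : ℕ) < r) : w i ≤ (r : ℤ) - (i : ℕ) := by
  rcases (hw.1 i hi).1.eq_or_lt with h0 | h0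
  · rw [← h0]
    have : (i : ℤ) ≤ (r : ℤ) := by exact_mod_cast hi.le
    linarith
  · have hn : 0 < n := i.pos
    have hchain := posChain hw (i : ℕ) ⟨0, hn⟩ i (by simp) hi h0
    have h2 := (hw.1 ⟨0, hn⟩ (by simp; omega)).2
    omega

lemma val_ge {n r : ℕ} {w : Fin n → ℤ} (hw : Admissible n r w) (i : Fin n)
    (hi : r ≤ (i : ℕ)) : -((((i : ℕ) - r : ℕ) : ℤ) + 1) ≤ w i := by
  rcases ((hw.2.1 i hi).2).eq_or_lt with h0 | h0
  · rw [h0]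
    have : (0 : ℤ) ≤ (((i : ℕ) - r : ℕ) : ℤ) := by positivity
    linarith
  · have hin := i.isLt
    have hn : n - 1 < n := by omega
    have hchain := negChain hw (n - 1 - (i : ℕ)) i ⟨n - 1, hn⟩ (by simp; omega) hi h0
    have h2 := (hw.2.1 ⟨n - 1, hn⟩ (by simp; omega)).1
    try simp only [Fin.val_mk] at hchain h2
    omega

lemma rho_nonneg {n r : ℕ} {w : Fin n → ℤ} (hw : Admissible n r w) :
    0 ≤ rho n r w := by
  refine Finset.sum_nonneg fun i _ => ?_
  by_cases h : (i : ℕ) < r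
  · simpa [h] using (hw.1 i h).1
  · have := val_ge hw i (by omega)
    simp only [h, if_false]
    omega

lemma gauss_sum (m : ℕ) : 2 * ∑ j ∈ Finset.range m, ((j : ℤ) + 1) = m * (m + 1) := by
  induction m with
  | zero => simp
  | succ m ih =>
    rw [Finset.sum_range_succ]
    have he : ((m : ℤ) + 1) * ((m : ℤ) + 1 + 1) = (m : ℤ) * ((m : ℤ) + 1) + 2 * ((m : ℤ) + 1) := by
      ring
    push_cast
    linarith [ih, he]

lemma two_Rnk (n r : ℕ) : 2 * Rnk n r = r * (r + 1) + (n - r) * (n - r + 1) := by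
  have h1 : 2 ∣ r * (r + 1) := (Nat.even_mul_succ_self r).two_dvd
  have h2 : 2 ∣ (n - r) * (n - r + 1) := (Nat.even_mul_succ_self (n - r)).two_dvd
  unfold Rnk
  omega

lemma rho_le_Rnk {n r : ℕ} {w : Fin n → ℤ} (hrn : r ≤ n) (hw : Admissible n r w) :
    rho n r w ≤ (Rnk n r : ℤ) := by
  have hB : rho n r w ≤ ∑ i : Fin n,
      (if (i : ℕ) < r then (r : ℤ) - (i : ℕ) else (((i : ℕ) - r : ℕ) : ℤ) + 1) := by
    refine Finset.sum_le_sum fun i _ => ?_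
    by_cases h : (i : ℕ) < r
    · simpa [h] using val_le hw i h
    · have := (hw.2.1 i (by omega)).2
      simp only [h, if_false]
      omega
  have hsum : 2 * ∑ i : Fin n,
      (if (i : ℕ) < r then (r : ℤ) - (i : ℕ) else (((i : ℕ) - r : ℕ) : ℤ) + 1)
      = 2 * (Rnk n r : ℤ) := by
    rw [Fin.sum_univ_eq_sum_range
      (fun i => if i < r then (r : ℤ) - i else ((i - r : ℕ) : ℤ) + 1)]
    rw [Finset.range_eq_Ico, ← Finset.sum_Ico_consecutive _ (Nat.zero_le r) hrn]
    have e1 : ∑ i ∈ Finset.Ico 0 r, (if i < r then (r : ℤ) - i else ((i - r : ℕ) : ℤ) + 1)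
        = ∑ i ∈ Finset.range r, ((r : ℤ) - i) := by
      rw [← Finset.range_eq_Ico]
      refine Finset.sum_congr rfl fun i hi => ?_
      rw [if_pos (Finset.mem_range.1 hi)]
    have e2 : ∑ i ∈ Finset.Ico r n, (if i < r then (r : ℤ) - i else ((i - r : ℕ) : ℤ) + 1)
        = ∑ i ∈ Finset.range (n - r), ((i : ℤ) + 1) := by
      rw [Finset.sum_Ico_eq_sum_range]
      refine Finset.sum_congr rfl fun i _ => ?_
      rw [if_neg (by omega)]
      congr 1
      omega
    have e3 : ∑ i ∈ Finset.range r, ((r : ℤ) - i) = ∑ i ∈ Finset.range r, ((i : ℤ) + 1) := by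
      rw [← Finset.sum_range_reflect]
      refine Finset.sum_congr rfl fun i hi => ?_
      have := Finset.mem_range.1 hi
      push_cast [Nat.sub_sub_self, Nat.succ_le_of_lt this]
      omega
    rw [e1, e2, e3, mul_add, gauss_sum, gauss_sum]
    have h2R : ((2 * Rnk n r : ℕ) : ℤ) = ((r * (r + 1) + (n - r) * (n - r + 1) : ℕ) : ℤ) := by
      exact_mod_cast congrArg (Nat.cast : ℕ → ℤ) (two_Rnk n r)
    push_cast at h2R
    linarith [h2R]
  omega

lemma ncard_add {α β : Type*} {P : Set α} {Q1 Q2 : Set β} {f g : β → α}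
    (hQ1 : Q1.Finite) (hQ2 : Q2.Finite)
    (hf : Set.InjOn f Q1) (hg : Set.InjOn g Q2)
    (hmem1 : ∀ b ∈ Q1, f b ∈ P) (hmem2 : ∀ b ∈ Q2, g b ∈ P)
    (hdis : ∀ b ∈ Q1, ∀ c ∈ Q2, f b ≠ g c)
    (hsur : ∀ a ∈ P, (∃ b ∈ Q1, f b = a) ∨ (∃ b ∈ Q2, g b = a)) :
    P.ncard = Q1.ncard + Q2.ncard := by
  have hPeq : P = f '' Q1 ∪ g '' Q2 := by
    apply Set.eq_of_subset_of_subset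
    · intro a ha
      rcases hsur a ha with ⟨b, hb, rfl⟩ | ⟨b, hb, rfl⟩
      · exact Or.inl ⟨b, hb, rfl⟩
      · exact Or.inr ⟨b, hb, rfl⟩
    · rintro a (⟨b, hb, rfl⟩ | ⟨b, hb, rfl⟩)
      · exact hmem1 b hb
      · exact hmem2 b hb
  have hd : Disjoint (f '' Q1) (g '' Q2) := by
    rw [Set.disjoint_left]
    rintro a ⟨b, hb, rfl⟩ ⟨c, hc, hca⟩
    exact hdis b hb c hc hca.symm
  rw [hPeq, Set.ncard_union_eq hd (hQ1.image f) (hQ2.image g),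
    Set.ncard_image_of_injOn hf, Set.ncard_image_of_injOn hg]

lemma snoc_apply_lt {n : ℕ} (w : Fin n → ℤ) (c : ℤ) (i : Fin (n + 1))
    (h : (i : ℕ) < n) : (Fin.snoc w c : Fin (n + 1) → ℤ) i = w ⟨i, h⟩ := by
  have : i = Fin.castSucc ⟨(i : ℕ), h⟩ := Fin.ext (by simp)
  conv_lhs => rw [this]
  rw [Fin.snoc_castSucc]

lemma snoc_apply_eq {n : ℕ} (w : Fin n → ℤ) (c : ℤ) (i : Fin (n + 1))
    (h : (i : ℕ) = n) : (Fin.snoc w c : Fin (n + 1) → ℤ) i = c := by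
  have : i = Fin.last n := Fin.ext (by simp [h])
  conv_lhs => rw [this]
  rw [Fin.snoc_last]

lemma cons_apply_zero {n : ℕ} (w : Fin n → ℤ) (c : ℤ) (i : Fin (n + 1))
    (h : (i : ℕ) = 0) : (Fin.cons c w : Fin (n + 1) → ℤ) i = c := by
  have : i = 0 := Fin.ext (by simp [h])
  conv_lhs => rw [this]
  rw [Fin.cons_zero]

lemma cons_apply_pos {n : ℕ} (w : Fin n → ℤ) (c : ℤ) (i : Fin (n + 1))
    (h : 0 < (i : ℕ)) : (Fin.cons c w : Fin (n + 1) → ℤ) i = w ⟨(i : ℕ) - 1, by have := i.isLt; omega⟩ := by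
  have : i = Fin.succ ⟨(i : ℕ) - 1, by have := i.isLt; omega⟩ := Fin.ext (by simp; omega)
  conv_lhs => rw [this]
  rw [Fin.cons_succ]

lemma succAbove_coe_lt {n r : ℕ} (hr : r < n + 1) (i : Fin n) (h : (i : ℕ) < r) :
    ((⟨r, hr⟩ : Fin (n + 1)).succAbove i : ℕ) = (i : ℕ) := by
  rw [Fin.succAbove_of_castSucc_lt _ _ (by simp [Fin.lt_def, h])]
  simp

lemma succAbove_coe_ge {n r : ℕ} (hr : r < n + 1) (i : Fin n) (h : r ≤ (i : ℕ)) :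
    ((⟨r, hr⟩ : Fin (n + 1)).succAbove i : ℕ) = (i : ℕ) + 1 := by
  rw [Fin.succAbove_of_le_castSucc _ _ (by simp [Fin.le_def, h])]
  simp

lemma ins_apply_lt {n r : ℕ} (hr : r < n + 1) (x : ℤ) (w : Fin n → ℤ) (i : Fin (n + 1))
    (h : (i : ℕ) < r) (h2 : (i : ℕ) < n) :
    (Fin.insertNth (⟨r, hr⟩ : Fin (n + 1)) x w : Fin (n + 1) → ℤ) i = w ⟨(i : ℕ), h2⟩ := by
  have e : (⟨r, hr⟩ : Fin (n + 1)).succAbove ⟨(i : ℕ), h2⟩ = i :=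
    Fin.ext (by rw [succAbove_coe_lt hr _ (by simpa using h)])
  conv_lhs => rw [← e]
  rw [Fin.insertNth_apply_succAbove]

lemma ins_apply_eq {n r : ℕ} (hr : r < n + 1) (x : ℤ) (w : Fin n → ℤ) (i : Fin (n + 1))
    (h : (i : ℕ) = r) : (Fin.insertNth (⟨r, hr⟩ : Fin (n + 1)) x w : Fin (n + 1) → ℤ) i = x := by
  have : i = (⟨r, hr⟩ : Fin (n + 1)) := Fin.ext (by simp [h])
  conv_lhs => rw [this]
  rw [Fin.insertNth_apply_same]

lemma ins_apply_gt {n r : ℕ} (hr : r < n + 1) (x : ℤ) (w : Fin n → ℤ) (i : Fin (n + 1))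
    (h : r < (i : ℕ)) :
    (Fin.insertNth (⟨r, hr⟩ : Fin (n + 1)) x w : Fin (n + 1) → ℤ) i
      = w ⟨(i : ℕ) - 1, by have := i.isLt; omega⟩ := by
  have e : (⟨r, hr⟩ : Fin (n + 1)).succAbove ⟨(i : ℕ) - 1, by have := i.isLt; omega⟩ = i := by
    apply Fin.ext
    rw [succAbove_coe_ge hr _ (by simp; omega)]
    simp
    omega
  conv_lhs => rw [← e]
  rw [Fin.insertNth_apply_succAbove]

lemma rho_snoc {n r : ℕ} (hr : r ≤ n) (w : Fin n → ℤ) (c : ℤ) :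
    rho (n + 1) r (Fin.snoc w c) = rho n r w + (((n - r : ℕ) : ℤ) + 1 + c) := by
  unfold rho
  rw [Fin.sum_univ_castSucc]
  simp only [Fin.snoc_castSucc, Fin.coe_castSucc, Fin.val_last, Fin.snoc_last]
  rw [if_neg (by omega)]

lemma ind_sum (n r : ℕ) :
    ∑ i ∈ Finset.range n, (if r ≤ i then (1 : ℤ) else 0) = ((n - r : ℕ) : ℤ) := by
  induction n with
  | zero => simp
  | succ n ih =>
    rw [Finset.sum_range_succ, ih]
    rcases le_or_gt r n with h | h
    · rw [if_pos h]; omega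
    · rw [if_neg (by omega)]; omega

lemma rho_insert {n r : ℕ} (hr : r < n + 1) (w : Fin n → ℤ) :
    rho (n + 1) r (Fin.insertNth (⟨r, hr⟩ : Fin (n + 1)) 0 w)
      = rho n r w + ((n - r : ℕ) : ℤ) + 1 := by
  unfold rho
  rw [Fin.sum_univ_succAbove
    (fun i : Fin (n + 1) => if (i : ℕ) < r
      then (Fin.insertNth (⟨r, hr⟩ : Fin (n + 1)) (0 : ℤ) w : Fin (n + 1) → ℤ) i
      else (((i : ℕ) - r : ℕ) : ℤ) + 1
        + (Fin.insertNth (⟨r, hr⟩ : Fin (n + 1)) (0 : ℤ) w : Fin (n + 1) → ℤ) i)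
    (⟨r, hr⟩ : Fin (n + 1))]
  have e0 : (if ((⟨r, hr⟩ : Fin (n + 1)) : ℕ) < r
      then (Fin.insertNth (⟨r, hr⟩ : Fin (n + 1)) (0 : ℤ) w : Fin (n + 1) → ℤ) ⟨r, hr⟩
      else ((((⟨r, hr⟩ : Fin (n + 1)) : ℕ) - r : ℕ) : ℤ) + 1
        + (Fin.insertNth (⟨r, hr⟩ : Fin (n + 1)) (0 : ℤ) w : Fin (n + 1) → ℤ) ⟨r, hr⟩) = 1 := by
    simp only [Fin.val_mk, lt_irrefl, if_false, Nat.sub_self]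
    rw [ins_apply_eq hr 0 w _ rfl]
    simp
  rw [e0]
  have hterm : ∀ i ∈ (Finset.univ : Finset (Fin n)),
      (if (((⟨r, hr⟩ : Fin (n + 1)).succAbove i : Fin (n + 1)) : ℕ) < r
      then (Fin.insertNth (⟨r, hr⟩ : Fin (n + 1)) (0 : ℤ) w : Fin (n + 1) → ℤ)
        ((⟨r, hr⟩ : Fin (n + 1)).succAbove i)
      else ((((⟨r, hr⟩ : Fin (n + 1)).succAbove i : ℕ) - r : ℕ) : ℤ) + 1
        + (Fin.insertNth (⟨r, hr⟩ : Fin (n + 1)) (0 : ℤ) w : Fin (n + 1) → ℤ)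
          ((⟨r, hr⟩ : Fin (n + 1)).succAbove i))
      = (if (i : ℕ) < r then w i else (((i : ℕ) - r : ℕ) : ℤ) + 1 + w i)
        + (if r ≤ (i : ℕ) then (1 : ℤ) else 0) := by
    intro i _
    by_cases h : (i : ℕ) < r
    · have hc := succAbove_coe_lt hr i h
      simp only [hc, h, if_pos, Fin.insertNth_apply_succAbove, if_neg (by omega : ¬ r ≤ (i : ℕ))]
      ring
    · have hc := succAbove_coe_ge hr i (by omega)
      simp only [hc, Fin.insertNth_apply_succAbove,
        if_neg (by omega : ¬ (i : ℕ) + 1 < r), if_neg h, if_pos (by omega : r ≤ (i : ℕ))]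
      have : (((i : ℕ) + 1 - r : ℕ) : ℤ) = (((i : ℕ) - r : ℕ) : ℤ) + 1 := by omega
      rw [this]
      ring
  rw [Finset.sum_congr rfl hterm, Finset.sum_add_distrib]
  rw [Fin.sum_univ_eq_sum_range (fun i => if r ≤ i then (1 : ℤ) else 0), ind_sum]
  ring

lemma rho_top {m : ℕ} (v : Fin m → ℤ) : rho m m v = ∑ i, v i :=
  Finset.sum_congr rfl fun i _ => if_pos i.isLt

lemma rho_cons_top {n : ℕ} (w : Fin n → ℤ) (c : ℤ) :
    rho (n + 1) (n + 1) (Fin.cons c w) = c + rho n n w := by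
  rw [rho_top, rho_top, Fin.sum_univ_succ]
  simp

lemma rho_snoc_top {n : ℕ} (w : Fin n → ℤ) :
    rho (n + 1) (n + 1) (Fin.snoc w 0) = rho n n w := by
  rw [rho_top, rho_top, Fin.sum_univ_castSucc]
  simp

lemma adm_snoc {n r : ℕ} (hr : r ≤ n) {w : Fin n → ℤ} (hw : Admissible n r w) :
    Admissible (n + 1) r (Fin.snoc w (-((n - r : ℕ) : ℤ) - 1)) := by
  obtain ⟨a1, a2, a3, a4, a5⟩ := hw
  set c : ℤ := -((n - r : ℕ) : ℤ) - 1 with hc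
  refine ⟨?_, ?_, ?_, ?_, ?_⟩
  · intro i hi
    rw [snoc_apply_lt w c i (by omega)]
    exact a1 ⟨(i : ℕ), by omega⟩ hi
  · intro i hi
    rcases Nat.lt_or_ge (i : ℕ) n with h | h
    · rw [snoc_apply_lt w c i h]
      have h2 := a2 ⟨(i : ℕ), h⟩ hi
      constructor
      · have := h2.1
        try simp only at this ⊢
        omega
      · exact h2.2
    · have h' : (i : ℕ) = n := by have := i.isLt; omega
      rw [snoc_apply_eq w c i h']
      constructor <;> omega
  · intro i j hij
    have hij' : (i : ℕ) ≤ (j : ℕ) := hij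
    rcases Nat.lt_or_ge (j : ℕ) n with hj | hj
    · have hi : (i : ℕ) < n := by omega
      rw [snoc_apply_lt w c i hi, snoc_apply_lt w c j hj]
      exact a3 ⟨(i : ℕ), hi⟩ ⟨(j : ℕ), hj⟩ (Fin.mk_le_mk.mpr hij')
    · have hj' : (j : ℕ) = n := by have := j.isLt; omega
      rw [snoc_apply_eq w c j hj']
      rcases Nat.lt_or_ge (i : ℕ) n with hi | hi
      · rw [snoc_apply_lt w c i hi]
        rcases Nat.lt_or_ge (i : ℕ) r with hir | hir
        · have := (a1 ⟨(i : ℕ), hi⟩ hir).1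
          omega
        · have := (a2 ⟨(i : ℕ), hi⟩ hir).1
          omega
      · rw [snoc_apply_eq w c i (by have := i.isLt; omega)]
  · intro i j hij hjr hne
    have hilt : (i : ℕ) < (j : ℕ) := hij
    have hj : (j : ℕ) < n := by omega
    have hi : (i : ℕ) < n := by omega
    rw [snoc_apply_lt w c j hj] at hne ⊢
    rw [snoc_apply_lt w c i hi]
    exact a4 ⟨(i : ℕ), hi⟩ ⟨(j : ℕ), hj⟩ (Fin.mk_lt_mk.mpr hilt) hjr hne
  · intro i j hij hir hne
    have hilt : (i : ℕ) < (j : ℕ) := hij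
    have hjlt := j.isLt
    have hi : (i : ℕ) < n := by omega
    rw [snoc_apply_lt w c i hi] at hne ⊢
    rcases Nat.lt_or_ge (j : ℕ) n with hjn | hjn
    · rw [snoc_apply_lt w c j hjn]
      exact a5 ⟨(i : ℕ), hi⟩ ⟨(j : ℕ), hjn⟩ (Fin.mk_lt_mk.mpr hilt) hir hne
    · rw [snoc_apply_eq w c j (by omega)]
      have := (a2 ⟨(i : ℕ), hi⟩ hir).1
      try simp only at this
      omega

lemma adm_init {n r : ℕ} (hr : r ≤ n) {w : Fin (n + 1) → ℤ}
    (hw : Admissible (n + 1) r w) : Admissible n r (Fin.init w) := by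
  obtain ⟨a1, a2, a3, a4, a5⟩ := hw
  have hini : ∀ i : Fin n, Fin.init w i = w (Fin.castSucc i) := fun i => rfl
  refine ⟨?_, ?_, ?_, ?_, ?_⟩
  · intro i hi
    rw [hini]
    exact a1 _ (by simpa using hi)
  · intro i hi
    rw [hini]
    have h2 := a2 (Fin.castSucc i) (by simpa using hi)
    refine ⟨?_, h2.2⟩
    rcases eq_or_lt_of_le h2.2 with h0 | h0
    · have : (0 : ℤ) ≤ ((n - r : ℕ) : ℤ) := by positivity
      omega
    · have hlast := a5 (Fin.castSucc i) (Fin.last n)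
        (by rw [Fin.lt_def]; simpa using i.isLt) (by simpa using hi) (ne_of_lt h0)
      have hl2 := (a2 (Fin.last n) (by simp; omega)).1
      try simp only [Fin.val_last] at hl2
      have hcast : ((n + 1 - r : ℕ) : ℤ) = ((n - r : ℕ) : ℤ) + 1 := by omega
      omega
  · intro i j hij
    rw [hini, hini]
    exact a3 _ _ (by simpa using hij)
  · intro i j hij hjr hne
    rw [hini] at hne ⊢
    rw [hini]
    exact a4 _ _ (by simpa using hij) (by simpa using hjr) hne
  · intro i j hij hir hne
    rw [hini] at hne ⊢
    rw [hini]
    exact a5 _ _ (by simpa using hij) (by simpa using hir) hne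

lemma adm_insert {n r : ℕ} (hr : r ≤ n) {w : Fin n → ℤ} (hw : Admissible n r w) :
    Admissible (n + 1) r
      (Fin.insertNth (⟨r, by omega⟩ : Fin (n + 1)) (0 : ℤ) w) := by
  obtain ⟨a1, a2, a3, a4, a5⟩ := hw
  have hr' : r < n + 1 := by omega
  refine ⟨?_, ?_, ?_, ?_, ?_⟩
  · intro i hi
    rw [ins_apply_lt hr' 0 w i hi (by omega)]
    exact a1 _ hi
  · intro i hi
    rcases eq_or_lt_of_le hi with h | h
    · rw [ins_apply_eq hr' 0 w i h.symm]
      constructor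
      · have : (0 : ℤ) ≤ ((n + 1 - r : ℕ) : ℤ) := by positivity
        omega
      · omega
    · rw [ins_apply_gt hr' 0 w i h]
      have h2 := a2 ⟨(i : ℕ) - 1, by have := i.isLt; omega⟩ (by simp; omega)
      refine ⟨?_, h2.2⟩
      have := h2.1
      try simp only at this
      omega
  · intro i j hij
    have hij' : (i : ℕ) ≤ (j : ℕ) := hij
    rcases Nat.lt_trichotomy (j : ℕ) r with hj | hj | hj
    · rw [ins_apply_lt hr' 0 w i (by omega) (by omega),
        ins_apply_lt hr' 0 w j hj (by omega)]
      exact a3 _ _ (Fin.mk_le_mk.mpr hij')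
    · rw [ins_apply_eq hr' 0 w j hj]
      rcases Nat.lt_or_ge (i : ℕ) r with hi | hi
      · rw [ins_apply_lt hr' 0 w i hi (by omega)]
        exact (a1 _ hi).1
      · rw [ins_apply_eq hr' 0 w i (by omega)]
    · rw [ins_apply_gt hr' 0 w j hj]
      have hjv := j.isLt
      rcases Nat.lt_trichotomy (i : ℕ) r with hi | hi | hi
      · rw [ins_apply_lt hr' 0 w i hi (by omega)]
        have hp := (a1 ⟨(i : ℕ), by omega⟩ hi).1
        have hq := (a2 ⟨(j : ℕ) - 1, by omega⟩ (by simp; omega)).2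
        omega
      · rw [ins_apply_eq hr' 0 w i hi]
        exact (a2 ⟨(j : ℕ) - 1, by omega⟩ (by simp; omega)).2
      · rw [ins_apply_gt hr' 0 w i hi]
        exact a3 _ _ (Fin.mk_le_mk.mpr (by omega))
  · intro i j hij hjr hne
    have hij' : (i : ℕ) < (j : ℕ) := hij
    rw [ins_apply_lt hr' 0 w j hjr (by omega)] at hne ⊢
    rw [ins_apply_lt hr' 0 w i (by omega) (by omega)]
    exact a4 _ _ (Fin.mk_lt_mk.mpr hij') hjr hne
  · intro i j hij hir hne
    have hij' : (i : ℕ) < (j : ℕ) := hij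
    have hjv := j.isLt
    rcases eq_or_lt_of_le hir with h | h
    · rw [ins_apply_eq hr' 0 w i h.symm] at hne
      exact absurd rfl hne
    · rw [ins_apply_gt hr' 0 w i h] at hne ⊢
      rw [ins_apply_gt hr' 0 w j (by omega)]
      exact a5 _ _ (Fin.mk_lt_mk.mpr (by omega)) (by simp; omega) hne

lemma wr_zero {n r : ℕ} (hr : r ≤ n) {w : Fin (n + 1) → ℤ}
    (hw : Admissible (n + 1) r w)
    (hlast : w (Fin.last n) ≠ -((n - r : ℕ) : ℤ) - 1) :
    w ⟨r, by omega⟩ = 0 := by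
  by_contra h0
  have h2 := hw.2.1 ⟨r, by omega⟩ (by simp)
  have hneg : w ⟨r, by omega⟩ < 0 := lt_of_le_of_ne h2.2 h0
  have hchain := negChain hw (n - r) ⟨r, by omega⟩ (Fin.last n)
    (by simp; omega) (by simp) hneg
  have hl2 := (hw.2.1 (Fin.last n) (by simp; omega)).1
  try simp only [Fin.val_last] at hl2 hchain hlast
  omega

lemma adm_remove {n r : ℕ} (hr : r ≤ n) {w : Fin (n + 1) → ℤ}
    (hw : Admissible (n + 1) r w)
    (hlast : w (Fin.last n) ≠ -((n - r : ℕ) : ℤ) - 1) :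
    Admissible n r (fun i : Fin n => w ((⟨r, by omega⟩ : Fin (n + 1)).succAbove i)) := by
  have hr' : r < n + 1 := by omega
  obtain ⟨a1, a2, a3, a4, a5⟩ := hw
  have hcoe : ∀ i : Fin n, (((⟨r, hr'⟩ : Fin (n + 1)).succAbove i : Fin (n + 1)) : ℕ)
      = if (i : ℕ) < r then (i : ℕ) else (i : ℕ) + 1 := by
    intro i
    by_cases h : (i : ℕ) < r
    · rw [succAbove_coe_lt hr' i h, if_pos h]
    · rw [succAbove_coe_ge hr' i (by omega), if_neg h]
  refine ⟨?_, ?_, ?_, ?_, ?_⟩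
  · intro i hi
    exact a1 _ (by rw [hcoe, if_pos hi]; exact hi)
  · intro i hi
    show -((n - r : ℕ) : ℤ) ≤ w ((⟨r, hr'⟩ : Fin (n + 1)).succAbove i) ∧
      w ((⟨r, hr'⟩ : Fin (n + 1)).succAbove i) ≤ 0
    have h2 := a2 ((⟨r, hr'⟩ : Fin (n + 1)).succAbove i)
      (by rw [hcoe, if_neg (by omega)]; omega)
    refine ⟨?_, h2.2⟩
    rcases eq_or_lt_of_le h2.2 with h0 | h0
    · have : (0 : ℤ) ≤ ((n - r : ℕ) : ℤ) := by positivity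
      omega
    · have hil := i.isLt
      rcases Nat.lt_or_ge ((i : ℕ) + 1) n with hin | hin
      · have hlt := a5 ((⟨r, hr'⟩ : Fin (n + 1)).succAbove i) (Fin.last n)
          (by rw [Fin.lt_def, hcoe, if_neg (by omega)]; simp; omega)
          (by rw [hcoe, if_neg (by omega)]; omega) (ne_of_lt h0)
        have hl2 := (a2 (Fin.last n) (by simp; omega)).1
        try simp only [Fin.val_last] at hl2
        omega
      · have he : (⟨r, hr'⟩ : Fin (n + 1)).succAbove i = Fin.last n :=
          Fin.ext (by rw [hcoe, if_neg (by omega)]; simp; omega)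
        rw [he]
        have hl2 := (a2 (Fin.last n) (by simp; omega)).1
        try simp only [Fin.val_last] at hl2 hlast
        rw [he] at h0
        omega
  · intro i j hij
    apply a3
    rw [Fin.le_def, hcoe, hcoe]
    have : (i : ℕ) ≤ (j : ℕ) := hij
    split_ifs <;> omega
  · intro i j hij hjr hne
    refine a4 _ _ ?_ ?_ hne
    · rw [Fin.lt_def, hcoe, hcoe]
      have : (i : ℕ) < (j : ℕ) := hij
      split_ifs <;> omega
    · rw [hcoe, if_pos hjr]; exact hjr
  · intro i j hij hir hne
    refine a5 _ _ ?_ ?_ hne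
    · rw [Fin.lt_def, hcoe, hcoe]
      have : (i : ℕ) < (j : ℕ) := hij
      split_ifs <;> omega
    · rw [hcoe, if_neg (by omega)]; omega

lemma adm_cons {n : ℕ} {w : Fin n → ℤ} (hw : Admissible n n w) :
    Admissible (n + 1) (n + 1) (Fin.cons ((n : ℤ) + 1) w) := by
  obtain ⟨a1, a2, a3, a4, a5⟩ := hw
  set c : ℤ := (n : ℤ) + 1 with hc
  refine ⟨?_, ?_, ?_, ?_, ?_⟩
  · intro i _
    rcases Nat.eq_zero_or_pos (i : ℕ) with h | h
    · rw [cons_apply_zero w c i h]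
      constructor <;> [positivity; simp [hc]]
    · rw [cons_apply_pos w c i h]
      have := a1 ⟨(i : ℕ) - 1, by have := i.isLt; omega⟩ (by simp; have := i.isLt; omega)
      constructor
      · exact this.1
      · have h2 := this.2; omega
  · intro i hi
    have := i.isLt; omega
  · intro i j hij
    have hij' : (i : ℕ) ≤ (j : ℕ) := hij
    rcases Nat.eq_zero_or_pos (j : ℕ) with hj | hj
    · rw [cons_apply_zero w c j hj, cons_apply_zero w c i (by omega)]
    · rw [cons_apply_pos w c j hj]
      rcases Nat.eq_zero_or_pos (i : ℕ) with hi | hi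
      · rw [cons_apply_zero w c i hi]
        have := (a1 ⟨(j : ℕ) - 1, by have := j.isLt; omega⟩
          (by simp; have := j.isLt; omega)).2
        omega
      · rw [cons_apply_pos w c i hi]
        exact a3 _ _ (Fin.mk_le_mk.mpr (by omega))
  · intro i j hij hjr hne
    have hij' : (i : ℕ) < (j : ℕ) := hij
    have hj : 0 < (j : ℕ) := by omega
    rw [cons_apply_pos w c j hj] at hne ⊢
    rcases Nat.eq_zero_or_pos (i : ℕ) with hi | hi
    · rw [cons_apply_zero w c i hi]
      have := (a1 ⟨(j : ℕ) - 1, by have := j.isLt; omega⟩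
        (by simp; have := j.isLt; omega)).2
      omega
    · rw [cons_apply_pos w c i hi]
      exact a4 _ _ (Fin.mk_lt_mk.mpr (by omega))
        (by simp; have := j.isLt; omega) hne
  · intro i j hij hir hne
    have := i.isLt; omega

lemma adm_tail {n : ℕ} {w : Fin (n + 1) → ℤ} (hw : Admissible (n + 1) (n + 1) w)
    (h0 : w 0 = (n : ℤ) + 1) : Admissible n n (Fin.tail w) := by
  obtain ⟨a1, a2, a3, a4, a5⟩ := hw
  have ht : ∀ i : Fin n, Fin.tail w i = w i.succ := fun i => rfl
  refine ⟨?_, ?_, ?_, ?_, ?_⟩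
  · intro i hi
    rw [ht]
    have h1 := a1 i.succ (by simp)
    refine ⟨h1.1, ?_⟩
    rcases eq_or_lt_of_le h1.1 with hz | hz
    · omega
    · have := a4 0 i.succ (by simp [Fin.lt_def]) (by simp) (ne_of_gt hz)
      rw [h0] at this
      omega
  · intro i hi
    have := i.isLt; omega
  · intro i j hij
    rw [ht, ht]
    exact a3 _ _ (by simpa using hij)
  · intro i j hij hjr hne
    rw [ht] at hne ⊢
    rw [ht]
    exact a4 _ _ (by simpa using hij) (by simp) hne
  · intro i j hij hir hne
    have := i.isLt; omega

lemma adm_snoc0 {n : ℕ} {w : Fin n → ℤ} (hw : Admissible n n w) :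
    Admissible (n + 1) (n + 1) (Fin.snoc w 0) := by
  obtain ⟨a1, a2, a3, a4, a5⟩ := hw
  refine ⟨?_, ?_, ?_, ?_, ?_⟩
  · intro i _
    rcases Nat.lt_or_ge (i : ℕ) n with h | h
    · rw [snoc_apply_lt w 0 i h]
      have := a1 ⟨(i : ℕ), h⟩ (by simpa using h)
      constructor
      · exact this.1
      · have h2 := this.2; omega
    · rw [snoc_apply_eq w 0 i (by have := i.isLt; omega)]
      constructor <;> [rfl; positivity]
  · intro i hi
    have := i.isLt; omega
  · intro i j hij
    have hij' : (i : ℕ) ≤ (j : ℕ) := hij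
    rcases Nat.lt_or_ge (j : ℕ) n with hj | hj
    · rw [snoc_apply_lt w 0 j hj, snoc_apply_lt w 0 i (by omega)]
      exact a3 _ _ (Fin.mk_le_mk.mpr hij')
    · rw [snoc_apply_eq w 0 j (by have := j.isLt; omega)]
      rcases Nat.lt_or_ge (i : ℕ) n with hi | hi
      · rw [snoc_apply_lt w 0 i hi]
        exact (a1 ⟨(i : ℕ), hi⟩ (by simpa using hi)).1
      · rw [snoc_apply_eq w 0 i (by have := i.isLt; omega)]
  · intro i j hij hjr hne
    have hij' : (i : ℕ) < (j : ℕ) := hij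
    rcases Nat.lt_or_ge (j : ℕ) n with hj | hj
    · rw [snoc_apply_lt w 0 j hj] at hne ⊢
      rw [snoc_apply_lt w 0 i (by omega)]
      exact a4 _ _ (Fin.mk_lt_mk.mpr hij') (by simpa using hj) hne
    · rw [snoc_apply_eq w 0 j (by have := j.isLt; omega)] at hne
      exact absurd rfl hne
  · intro i j hij hir hne
    have := i.isLt; omega

lemma adm_init_top {n : ℕ} {w : Fin (n + 1) → ℤ} (hw : Admissible (n + 1) (n + 1) w)
    (h0 : w 0 ≠ (n : ℤ) + 1) : Admissible n n (Fin.init w) := by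
  obtain ⟨a1, a2, a3, a4, a5⟩ := hw
  have hub : ∀ i : Fin (n + 1), w i ≤ (n : ℤ) := by
    intro i
    have h1 := (a1 0 (by simp)).2
    have h00 : w 0 ≤ (n : ℤ) := by
      push_cast at h1
      omega
    calc w i ≤ w 0 := a3 0 i (by simp [Fin.le_def])
    _ ≤ (n : ℤ) := h00
  have hini : ∀ i : Fin n, Fin.init w i = w (Fin.castSucc i) := fun i => rfl
  refine ⟨?_, ?_, ?_, ?_, ?_⟩
  · intro i _
    rw [hini]
    exact ⟨(a1 _ (by simp only [Fin.coe_castSucc]; omega)).1, hub _⟩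
  · intro i hi
    have := i.isLt; omega
  · intro i j hij
    rw [hini, hini]
    exact a3 _ _ (by simpa using hij)
  · intro i j hij hjr hne
    rw [hini] at hne ⊢
    rw [hini]
    exact a4 _ _ (by simpa using hij) (by simp only [Fin.coe_castSucc]; omega) hne
  · intro i j hij hir hne
    have := i.isLt; omega

lemma wlast_zero {n : ℕ} {w : Fin (n + 1) → ℤ} (hw : Admissible (n + 1) (n + 1) w)
    (h0 : w 0 ≠ (n : ℤ) + 1) : w (Fin.last n) = 0 := by
  have h1 := (hw.1 (Fin.last n) (by simp)).1
  rcases eq_or_lt_of_le h1 with hz | hz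
  · omega
  · exfalso
    have hchain := posChain hw n 0 (Fin.last n) (by simp) (by simp) hz
    have h2 := (hw.1 0 (by simp)).2
    have h00 : w 0 ≤ (n : ℤ) := by
      push_cast at h2
      omega
    try simp only [Fin.val_last] at hchain
    omega

lemma rec_neg {n r : ℕ} (hr : r ≤ n) (κ : ℤ) :
    sZ (n + 1) r κ = sZ n r κ + sZ n r (κ - ((n - r : ℕ) : ℤ) - 1) := by
  have hr' : r < n + 1 := by omega
  set c : ℤ := -((n - r : ℕ) : ℤ) - 1 with hc
  apply ncard_add (admSet_finite n r κ) (admSet_finite n r (κ - ((n - r : ℕ) : ℤ) - 1))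
    (f := fun w => Fin.snoc w c)
    (g := fun w => Fin.insertNth (⟨r, hr'⟩ : Fin (n + 1)) (0 : ℤ) w)
  · intro a _ b _ hab
    funext i
    have := congrFun hab (Fin.castSucc i)
    simpa [Fin.snoc_castSucc] using this
  · intro a _ b _ hab
    funext i
    have := congrFun hab ((⟨r, hr'⟩ : Fin (n + 1)).succAbove i)
    simpa [Fin.insertNth_apply_succAbove] using this
  · rintro b ⟨hadm, hrho⟩
    refine ⟨adm_snoc hr hadm, ?_⟩
    rw [rho_snoc hr b c, hrho, hc]
    ring
  · rintro b ⟨hadm, hrho⟩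
    refine ⟨adm_insert hr hadm, ?_⟩
    rw [rho_insert hr' b, hrho]
    ring
  · rintro b ⟨hadm, _⟩ b' ⟨hadm', _⟩ hcon
    have h1 := congrFun hcon (Fin.last n)
    rw [snoc_apply_eq b c _ (by simp)] at h1
    rcases Nat.lt_or_ge r n with hrn | hrn
    · rw [ins_apply_gt hr' 0 b' (Fin.last n) (by simp; omega)] at h1
      have h2 := (hadm'.2.1 ⟨n - 1, by omega⟩ (by simp; omega)).1
      simp only [Fin.val_last] at h1
      try simp only at h2
      omega
    · have hrn' : r = n := by omega
      rw [ins_apply_eq hr' 0 b' (Fin.last n) (by simp; omega)] at h1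
      omega
  · rintro a ⟨hadm, hrho⟩
    by_cases hl : a (Fin.last n) = c
    · left
    
      have heq : (Fin.snoc (Fin.init a) c : Fin (n + 1) → ℤ) = a := by
        rw [← hl, Fin.snoc_init_self]
      refine ⟨Fin.init a, ⟨adm_init hr hadm, ?_⟩, heq⟩
      have := rho_snoc hr (Fin.init a) c
      rw [heq, hrho, hc] at this
      omega
    · right
      set b : Fin n → ℤ := fun i : Fin n => a ((⟨r, hr'⟩ : Fin (n + 1)).succAbove i) with hb
      have heq : (Fin.insertNth (⟨r, hr'⟩ : Fin (n + 1)) (0 : ℤ) b : Fin (n + 1) → ℤ) = a := by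
        funext i
        rcases Nat.lt_trichotomy (i : ℕ) r with h | h | h
        · rw [ins_apply_lt hr' 0 b i h (by omega)]
          show a ((⟨r, hr'⟩ : Fin (n + 1)).succAbove ⟨(i : ℕ), by omega⟩) = a i
          exact congrArg a (Fin.ext (succAbove_coe_lt hr' _ (by simpa using h)))
        · rw [ins_apply_eq hr' 0 b i h]
          have := wr_zero hr hadm hl
          have hieq : i = (⟨r, by omega⟩ : Fin (n + 1)) := Fin.ext (by simpa using h)
          rw [hieq]
          exact this.symm
        · rw [ins_apply_gt hr' 0 b i h]
          show a ((⟨r, hr'⟩ : Fin (n + 1)).succAbove ⟨(i : ℕ) - 1, by have := i.isLt; omega⟩) = a i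
          refine congrArg a (Fin.ext ?_)
          rw [succAbove_coe_ge hr' _ (by simp; omega)]
          simp
          omega
      refine ⟨b, ⟨adm_remove hr hadm hl, ?_⟩, heq⟩
      have := rho_insert hr' b
      rw [heq, hrho] at this
      omega

lemma rec_top {n : ℕ} (κ : ℤ) :
    sZ (n + 1) (n + 1) κ = sZ n n κ + sZ n n (κ - ((n : ℤ) + 1)) := by
  apply ncard_add (admSet_finite n n κ) (admSet_finite n n (κ - ((n : ℤ) + 1)))
    (f := fun w => Fin.snoc w (0 : ℤ))
    (g := fun w => Fin.cons ((n : ℤ) + 1) w)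
  · intro a _ b _ hab
    funext i
    have := congrFun hab (Fin.castSucc i)
    simpa [Fin.snoc_castSucc] using this
  · intro a _ b _ hab
    funext i
    have := congrFun hab (Fin.succ i)
    simpa [Fin.cons_succ] using this
  · rintro b ⟨hadm, hrho⟩
    exact ⟨adm_snoc0 hadm, by rw [rho_snoc_top, hrho]⟩
  · rintro b ⟨hadm, hrho⟩
    refine ⟨adm_cons hadm, ?_⟩
    rw [rho_cons_top, hrho]
    ring
  · rintro b ⟨hadm, _⟩ b' ⟨hadm', _⟩ hcon
    have h1 := congrFun hcon 0
    rw [cons_apply_zero b' ((n : ℤ) + 1) 0 (by simp)] at h1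
    rcases Nat.eq_zero_or_pos n with hn | hn
    · subst hn
      rw [snoc_apply_eq b 0 0 (by simp)] at h1
      omega
    · rw [snoc_apply_lt b 0 0 (by simpa using hn)] at h1
      have h2 := (hadm.1 ⟨0, hn⟩ (by simpa using hn)).2
      simp only [Fin.val_zero] at h1
      omega
  · rintro a ⟨hadm, hrho⟩
    by_cases h0 : a 0 = (n : ℤ) + 1
    · right
      have heq : (Fin.cons ((n : ℤ) + 1) (Fin.tail a) : Fin (n + 1) → ℤ) = a := by
        rw [← h0, Fin.cons_self_tail]
      refine ⟨Fin.tail a, ⟨adm_tail hadm h0, ?_⟩, heq⟩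
      have := rho_cons_top (Fin.tail a) ((n : ℤ) + 1)
      rw [heq, hrho] at this
      omega
    · left
      have heq : (Fin.snoc (Fin.init a) (0 : ℤ) : Fin (n + 1) → ℤ) = a := by
        rw [← wlast_zero hadm h0, Fin.snoc_init_self]
      refine ⟨Fin.init a, ⟨adm_init_top hadm h0, ?_⟩, heq⟩
      have := rho_snoc_top (Fin.init a)
      rw [heq, hrho] at this
      exact this.symm

lemma rec_neg' {n r : ℕ} (hr : r < n) (κ : ℤ) :
    sZ n r κ = sZ (n - 1) r κ + sZ (n - 1) r (κ - ((n - r : ℕ) : ℤ)) := by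
  cases n with
  | zero => omega
  | succ m =>
    have h1 : r ≤ m := by omega
    have h2 : κ - ((m + 1 - r : ℕ) : ℤ) = κ - ((m - r : ℕ) : ℤ) - 1 := by omega
    simpa [h2] using rec_neg h1 κ

lemma sZ_diag : ∀ n : ℕ, ∀ κ : ℤ, sZ n n κ = sZ n 0 κ := by
  intro n
  induction n with
  | zero => intro κ; rfl
  | succ n ih =>
    intro κ
    rw [rec_top κ, ih, ih, rec_neg (Nat.zero_le n) κ]
    congr 2
    simp
    ring

lemma sZ_zero_of_neg {n r : ℕ} {κ : ℤ} (hκ : κ < 0) : sZ n r κ = 0 := by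
  unfold sZ
  convert Set.ncard_empty (Fin n → ℤ)
  rw [Set.eq_empty_iff_forall_notMem]
  rintro w ⟨hadm, hrho⟩
  have := rho_nonneg hadm
  omega

lemma sZ_zero_of_gt {n r : ℕ} {κ : ℤ} (hrn : r ≤ n) (hκ : (Rnk n r : ℤ) < κ) :
    sZ n r κ = 0 := by
  unfold sZ
  convert Set.ncard_empty (Fin n → ℤ)
  rw [Set.eq_empty_iff_forall_notMem]
  rintro w ⟨hadm, hrho⟩
  have := rho_le_Rnk hrn hadm
  omega

/-- the recursion for the rank numbers `s(n,r,k)` of `S(n,r)`. -/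
theorem sCount_recursion (n r k : ℕ) (hn : 1 ≤ n) :
    (r < n →
      ((k < n - r → sCount n r k = sCount (n - 1) r k) ∧
       (n - r ≤ k → k ≤ Rnk (n - 1) r →
         sCount n r k = sCount (n - 1) r k + sCount (n - 1) r (k - (n - r))) ∧
       (Rnk (n - 1) r < k → k ≤ Rnk n r →
         sCount n r k = sCount (n - 1) r (k - (n - r))))) ∧
    sCount n n k = sCount n 0 k := by
  constructor
  · intro hr
    have hbase := rec_neg' hr (k : ℤ)
    refine ⟨?_, ?_, ?_⟩
    · intro hk
      have h0 : sZ (n - 1) r ((k : ℤ) - ((n - r : ℕ) : ℤ)) = 0 :=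
        sZ_zero_of_neg (by omega)
      rw [sCount_eq_sZ, sCount_eq_sZ, hbase, h0]
      omega
    · intro hk _
      have hcast : (k : ℤ) - ((n - r : ℕ) : ℤ) = ((k - (n - r) : ℕ) : ℤ) := by omega
      rw [sCount_eq_sZ, sCount_eq_sZ, sCount_eq_sZ, hbase, hcast]
    · intro hk _
      have h0 : sZ (n - 1) r (k : ℤ) = 0 :=
        sZ_zero_of_gt (by omega) (by exact_mod_cast hk)
      have hm : 2 * (n - 1 - r) ≤ (n - 1 - r) * (n - 1 - r + 1) := by
        rcases Nat.eq_zero_or_pos (n - 1 - r) with h | h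
        · simp [h]
        · calc 2 * (n - 1 - r) = (n - 1 - r) * 2 := by ring
          _ ≤ (n - 1 - r) * (n - 1 - r + 1) := Nat.mul_le_mul_left _ (by omega)
      have h2R := two_Rnk (n - 1) r
      have hcast : (k : ℤ) - ((n - r : ℕ) : ℤ) = ((k - (n - r) : ℕ) : ℤ) := by omega
      rw [sCount_eq_sZ, sCount_eq_sZ, hbase, h0, hcast]
      omega
  · rw [sCount_eq_sZ, sCount_eq_sZ, sZ_diag]
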